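/- Let n ≥ 2 and let M be a maximal subalgebra of the Lie algebra W_n that is finite dimensional as a K-vector space. Then M is not a solvable Lie algebra. -/

import Mathlib

open MvPolynomial

/-- `Wn K n` is the Lie algebra of all `K`-derivations of `K[x_1, …, x_n]`. -/
abbrev Wn (K : Type) [Field K] (n : ℕ) :=
  Derivation K (MvPolynomial (Fin n) K) (MvPolynomial (Fin n) K)

section LieTheorem

open Module LieModule

variable {K : Type} [Field K]
variable {V : Type} [AddCommGroup V] [Module K V] [FiniteDimensional K V]
variable {L : Type} [LieRing L] [LieAlgebra K L]

/-- bracket of any two elements lies in the first derived series term. -/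
lemma lie_mem_derived_one (x y : L) : ⁅x, y⁆ ∈ LieAlgebra.derivedSeries K L 1 := by
  rw [LieAlgebra.derivedSeries_def, show (1:ℕ) = 0+1 from rfl,
    LieAlgebra.derivedSeriesOfIdeal_succ, LieAlgebra.derivedSeriesOfIdeal_zero]
  exact LieSubmodule.lie_mem_lie (LieSubmodule.mem_top x) (LieSubmodule.mem_top y)

/-- The invariance (trace) lemma: if `w₀` is a common eigenvector for an ideal `I`
with eigenvalue function `χ`, then `χ` vanishes on brackets `⁅x, z⁆` for `x ∈ I`, `z ∈ L`. -/
lemma trace_trick [CharZero K] [LieRingModule L V] [LieModule K L V]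
    (I : LieIdeal K L) (χ : I → K) (z : L)
    (w₀ : V) (hw₀ : w₀ ≠ 0) (hw : ∀ x : I, ⁅(x : L), w₀⁆ = χ x • w₀)
    (x : I) (hxz : ⁅(x : L), z⁆ ∈ I) : χ ⟨⁅(x : L), z⁆, hxz⟩ = 0 := by
  classical
  set f : Module.End K V := toEnd K L V z with hf
  set g : I → Module.End K V := fun a => toEnd K L V (a : L) with hg
  -- the chain of subspaces
  set Ui : ℕ → Submodule K V :=
    fun i => Submodule.span K ((fun j => (f ^ j) w₀) '' Set.Iio i) with hUi
  have hUimono : Monotone Ui := by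
    intro a b hab
    exact Submodule.span_mono (Set.image_mono (fun t ht => lt_of_lt_of_le ht hab))
  have hUi0 : Ui 0 = ⊥ := by
    have h0 : Set.Iio (0:ℕ) = ∅ := by ext t; simp
    simp [hUi, h0]
  have hgen : ∀ i j, j < i → (f ^ j) w₀ ∈ Ui i := fun i j hj =>
    Submodule.subset_span ⟨j, hj, rfl⟩
  have hfUi : ∀ i, ∀ v ∈ Ui i, f v ∈ Ui (i+1) := by
    intro i v hv
    induction hv using Submodule.span_induction with
    | mem u hu =>
      obtain ⟨j, hj, rfl⟩ := hu
      rw [Set.mem_Iio] at hj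
      have : f ((f ^ j) w₀) = (f ^ (j+1)) w₀ := by
        rw [pow_succ']; rfl
      rw [this]
      exact hgen _ _ (by omega)
    | zero => simp
    | add u v _ _ hu hv => rw [map_add]; exact add_mem hu hv
    | smul c u _ hu => rw [map_smul]; exact Submodule.smul_mem _ _ hu
  -- brackets into the ideal
  have hbr : ∀ a : I, ⁅(a : L), z⁆ ∈ I := by
    intro a
    have : ⁅(a : L), z⁆ = -⁅z, (a : L)⁆ := by rw [lie_skew]
    rw [this]
    exact neg_mem (I.lie_mem a.2)
  set brz : I → I := fun a => ⟨⁅(a : L), z⁆, hbr a⟩ with hbrz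
  have hcomm : ∀ (a : I) (u : V), g (brz a) u = g a (f u) - f (g a u) := by
    intro a u
    have h1 : toEnd K L V ⁅(a : L), z⁆ = g a * f - f * g a := by
      ext v
      show ⁅⁅(a : L), z⁆, v⁆ = ⁅(a : L), ⁅z, v⁆⁆ - ⁅z, ⁅(a : L), v⁆⁆
      exact lie_lie _ _ _
    have : g (brz a) = toEnd K L V ⁅(a : L), z⁆ := rfl
    rw [this, h1]; rfl
  -- Claim A
  have claimA : ∀ j : ℕ, ∀ a : I, g a ((f ^ j) w₀) - χ a • (f ^ j) w₀ ∈ Ui j := by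
    intro j
    induction j with
    | zero =>
      intro a
      have : g a ((f ^ 0) w₀) = χ a • (f ^ 0) w₀ := by
        show toEnd K L V (a : L) ((f ^ 0) w₀) = χ a • (f ^ 0) w₀
        simpa using hw a
      rw [this, sub_self]
      exact zero_mem _
    | succ j ih =>
      intro a
      set u := (f ^ j) w₀ with hu
      have hpow : (f ^ (j+1)) w₀ = f u := by rw [pow_succ']; rfl
      obtain ⟨r₁, hr₁, e₁⟩ : ∃ r₁, r₁ ∈ Ui j ∧ g (brz a) u = χ (brz a) • u + r₁ := by
        refine ⟨_, ih (brz a), by abel⟩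
      obtain ⟨r₂, hr₂, e₂⟩ : ∃ r₂, r₂ ∈ Ui j ∧ g a u = χ a • u + r₂ := by
        refine ⟨_, ih a, by abel⟩
      have key : g a ((f ^ (j+1)) w₀) - χ a • (f ^ (j+1)) w₀
          = χ (brz a) • u + r₁ + f r₂ := by
        rw [hpow]
        have : g a (f u) = g (brz a) u + f (g a u) := by
          rw [hcomm a u]; abel
        rw [this, e₁, e₂, map_add, map_smul]
        abel
      rw [key]
      refine add_mem (add_mem ?_ ?_) ?_
      · exact Submodule.smul_mem _ _ (hgen _ _ (by omega))
      · exact hUimono (by omega) hr₁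
      · exact hfUi j r₂ hr₂
  -- the full space U
  set U : Submodule K V := Submodule.span K (Set.range (fun j => (f ^ j) w₀)) with hU
  have hUiU : ∀ i, Ui i ≤ U := by
    intro i
    exact Submodule.span_mono (fun t ht => by
      obtain ⟨j, _, rfl⟩ := ht; exact ⟨j, rfl⟩)
  have hfU : ∀ v ∈ U, f v ∈ U := by
    intro v hv
    induction hv using Submodule.span_induction with
    | mem u hu =>
      obtain ⟨j, rfl⟩ := hu
      have : f ((f ^ j) w₀) = (f ^ (j+1)) w₀ := by rw [pow_succ']; rfl
      rw [this]
      exact Submodule.subset_span ⟨j+1, rfl⟩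
    | zero => simp
    | add u v _ _ hu hv => rw [map_add]; exact add_mem hu hv
    | smul c u _ hu => rw [map_smul]; exact Submodule.smul_mem _ _ hu
  have hgU : ∀ a : I, ∀ v ∈ U, g a v ∈ U := by
    intro a v hv
    induction hv using Submodule.span_induction with
    | mem u hu =>
      obtain ⟨j, rfl⟩ := hu
      have h1 := claimA j a
      have : g a ((f ^ j) w₀) = (g a ((f ^ j) w₀) - χ a • (f ^ j) w₀) + χ a • (f ^ j) w₀ := by
        abel
      rw [this]
      exact add_mem (hUiU j h1) (Submodule.smul_mem _ _ (Submodule.subset_span ⟨j, rfl⟩))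
    | zero => simp
    | add u v _ _ hu hv => rw [map_add]; exact add_mem hu hv
    | smul c u _ hu => rw [map_smul]; exact Submodule.smul_mem _ _ hu
  -- stabilization
  obtain ⟨m, hm⟩ := monotone_stabilizes_iff_noetherian.mpr inferInstance ⟨Ui, hUimono⟩
  have hUle : U ≤ Ui m := by
    rw [hU, Submodule.span_le]
    rintro t ⟨j, rfl⟩
    by_cases hjm : j + 1 ≤ m
    · exact hUimono hjm (hgen _ _ (by omega))
    · have := hm (j+1) (by omega)
      have h2 : Ui m = Ui (j+1) := this
      rw [h2]
      exact hgen _ _ (by omega)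
  -- restrictions
  set y : I := brz x with hy
  set F : Module.End K U := f.restrict hfU with hF
  set Gx : Module.End K U := (g x).restrict (hgU x) with hGx
  set Gy : Module.End K U := (g y).restrict (hgU y) with hGy
  have hyrel : Gy = Gx * F - F * Gx := by
    ext u
    have := hcomm x (u : V)
    simpa [hGy, hGx, hF, LinearMap.restrict_apply, Module.End.mul_apply] using this
  have htr0 : LinearMap.trace K U Gy = 0 := by
    rw [hyrel, map_sub, LinearMap.trace_mul_comm, sub_self]
  -- nilpotency of Gy - χ y • 1
  set S : Module.End K V := g y - χ y • 1 with hS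
  have hSU : ∀ v ∈ U, S v ∈ U := by
    intro v hv
    have : S v = g y v - χ y • v := rfl
    rw [this]
    exact sub_mem (hgU y v hv) (Submodule.smul_mem _ _ hv)
  have hSstep : ∀ i, ∀ v ∈ Ui (i+1), S v ∈ Ui i := by
    intro i v hv
    induction hv using Submodule.span_induction with
    | mem u hu =>
      obtain ⟨j, hj, rfl⟩ := hu
      rw [Set.mem_Iio] at hj
      have : S ((f ^ j) w₀) = g y ((f ^ j) w₀) - χ y • (f ^ j) w₀ := rfl
      rw [this]
      exact hUimono (by omega : j ≤ i) (claimA j y)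
    | zero => simp
    | add u v _ _ hu hv => rw [map_add]; exact add_mem hu hv
    | smul c u _ hu => rw [map_smul]; exact Submodule.smul_mem _ _ hu
  have hSpow : ∀ k, ∀ v ∈ Ui k, (S ^ k) v = 0 := by
    intro k
    induction k with
    | zero =>
      intro v hv
      rw [hUi0] at hv
      simpa using (Submodule.mem_bot K).mp hv
    | succ k ih =>
      intro v hv
      have : (S ^ (k+1)) v = (S ^ k) (S v) := by rw [pow_succ]; rfl
      rw [this]
      exact ih _ (hSstep k v hv)
  set T : Module.End K U := S.restrict hSU with hT
  have hTGy : Gy = T + χ y • 1 := by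
    ext u
    simp only [hGy, hT, LinearMap.restrict_apply, Module.End.mul_apply]
    have : S (u : V) = g y (u : V) - χ y • (u : V) := rfl
    simp [LinearMap.add_apply, this]
  have hTpow : ∀ k, ∀ u : U, ((T ^ k) u : V) = (S ^ k) (u : V) := by
    intro k
    induction k with
    | zero => intro u; rfl
    | succ k ih =>
      intro u
      have h1 : (T ^ (k+1)) u = (T ^ k) (T u) := by rw [pow_succ]; rfl
      rw [h1, ih (T u)]
      have h2 : ((T u : V)) = S (u : V) := rfl
      rw [h2]
      rw [pow_succ]; rfl
  have hTnil : IsNilpotent T := by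
    refine ⟨m, ?_⟩
    ext u
    have : ((T ^ m) u : V) = (S ^ m) (u : V) := hTpow m u
    rw [this, hSpow m _ (hUle u.2)]
    rfl
  have htrT : LinearMap.trace K U T = 0 :=
    (LinearMap.isNilpotent_trace_of_isNilpotent hTnil).eq_zero
  have htrGy : LinearMap.trace K U Gy = χ y * (finrank K U : K) := by
    rw [hTGy, map_add, htrT, map_smul, LinearMap.trace_one, zero_add, smul_eq_mul]
  have hfinpos : 0 < finrank K U := by
    have hw₀U : w₀ ∈ U := by
      have : (f ^ 0) w₀ ∈ U := Submodule.subset_span ⟨0, rfl⟩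
      simpa using this
    have : Nontrivial U := ⟨⟨⟨w₀, hw₀U⟩, 0, by
      intro h
      exact hw₀ (by simpa using congrArg Subtype.val h)⟩⟩
    exact finrank_pos
  have : χ y * (finrank K U : K) = 0 := by rw [← htrGy, htr0]
  rcases mul_eq_zero.mp this with h | h
  · exact h
  · exact absurd h (by exact_mod_cast hfinpos.ne')
end LieTheorem
section LieTheorem2

open Module LieModule

variable {K : Type} [Field K] [IsAlgClosed K] [CharZero K]
variable {V : Type} [AddCommGroup V] [Module K V] [FiniteDimensional K V]

/-- Lie's theorem: a solvable Lie algebra over an algebraically closed field of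
characteristic zero acting on a nonzero finite-dimensional module has a common
eigenvector. -/
theorem solvable_exists_common_eigenvector
    (L : Type) [LieRing L] [LieAlgebra K L] [LieRingModule L V] [LieModule K L V]
    [FiniteDimensional K L] [LieAlgebra.IsSolvable L] [Nontrivial V] :
    ∃ (χ : L → K) (v : V), v ≠ 0 ∧ ∀ x : L, ⁅x, v⁆ = χ x • v := by
  rcases subsingleton_or_nontrivial L with hL | hL
  · obtain ⟨v, hv⟩ := exists_ne (0 : V)
    refine ⟨0, v, hv, fun x => ?_⟩
    rw [Subsingleton.elim x 0]
    simp
  · have hd : LieAlgebra.derivedSeries K L 1 < ⊤ :=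
      LieAlgebra.derivedSeries_lt_top_of_solvable K L
    obtain ⟨z, -, hz⟩ := SetLike.exists_of_lt hd
    have hz' : z ∉ (LieAlgebra.derivedSeries K L 1 : Submodule K L) := hz
    obtain ⟨φ, hφz, hφS⟩ :=
      Submodule.exists_dual_map_eq_bot_of_notMem hz' inferInstance
    have hφ0 : ∀ w ∈ (LieAlgebra.derivedSeries K L 1 : Submodule K L), φ w = 0 := by
      intro w hw
      have : φ w ∈ Submodule.map φ (LieAlgebra.derivedSeries K L 1 : Submodule K L) :=
        Submodule.mem_map_of_mem hw
      rw [hφS] at this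
      simpa using this
    set H : LieIdeal K L :=
      { toSubmodule := LinearMap.ker φ
        lie_mem := by
          intro a m _
          have : φ ⁅a, m⁆ = 0 := hφ0 _ (lie_mem_derived_one a m)
          simpa [LinearMap.mem_ker] using this } with hH
    haveI : LieAlgebra.IsSolvable H :=
      Function.Injective.lieAlgebra_isSolvable (f := (H : LieSubalgebra K L).incl)
        Subtype.coe_injective
    have hzH : z ∉ H := by
      intro hmem
      exact hφz (by simpa [hH, LinearMap.mem_ker] using hmem)
    have hrank : finrank K H < finrank K L := by
      have hlt : (H : Submodule K L) < ⊤ := lt_top_iff_ne_top.mpr (by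
        intro htop
        apply hzH
        have : z ∈ (H : Submodule K L) := by rw [htop]; trivial
        exact this)
      have h := Submodule.finrank_lt_finrank_of_lt hlt
      rw [finrank_top] at h
      exact h
    obtain ⟨χ₁, v₀, hv₀, hweight⟩ :
        ∃ (χ : H → K) (v : V), v ≠ 0 ∧ ∀ x : H, ⁅x, v⁆ = χ x • v :=
      solvable_exists_common_eigenvector H
    have hweight' : ∀ x : H, ⁅(x : L), v₀⁆ = χ₁ x • v₀ := fun x => hweight x
    -- weight space
    set Wsp : Submodule K V :=
      { carrier := {v | ∀ x : H, ⁅(x : L), v⁆ = χ₁ x • v}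
        add_mem' := by
          intro a b ha hb x
          rw [lie_add, ha x, hb x, smul_add]
        zero_mem' := by
          intro x; simp
        smul_mem' := by
          intro c a ha x
          rw [lie_smul, ha x, smul_comm] } with hWsp
    have hv₀W : v₀ ∈ Wsp := hweight'
    have hvanish : ∀ x : H, ∀ h : ⁅(x : L), z⁆ ∈ H, χ₁ ⟨⁅(x : L), z⁆, h⟩ = 0 :=
      fun x h => trace_trick H χ₁ z v₀ hv₀ hweight' x h
    have hbr : ∀ x : H, ⁅(x : L), z⁆ ∈ H := by
      intro x
      have : ⁅(x : L), z⁆ = -⁅z, (x : L)⁆ := by rw [lie_skew]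
      rw [this]
      exact neg_mem (H.lie_mem x.2)
    have hzW : ∀ w ∈ Wsp, ⁅z, w⁆ ∈ Wsp := by
      intro w hw x
      have h1 : ⁅(x : L), ⁅z, w⁆⁆ = ⁅⁅(x : L), z⁆, w⁆ + ⁅z, ⁅(x : L), w⁆⁆ :=
        leibniz_lie _ _ _
      have h2 : ⁅⁅(x : L), z⁆, w⁆ = χ₁ ⟨⁅(x : L), z⁆, hbr x⟩ • w := hw ⟨_, hbr x⟩
      rw [h1, h2, hvanish x (hbr x), zero_smul, zero_add, hw x, lie_smul]
    -- eigenvector for z on the weight space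
    haveI : Nontrivial Wsp := ⟨⟨⟨v₀, hv₀W⟩, 0, by
      intro h
      exact hv₀ (by simpa using congrArg Subtype.val h)⟩⟩
    set F : Module.End K Wsp := (toEnd K L V z).restrict hzW with hF
    obtain ⟨c, hc⟩ := Module.End.exists_eigenvalue F
    obtain ⟨v, hvF⟩ := hc.exists_hasEigenvector
    have hveq : ((v : Wsp) : V) ≠ 0 := by
      intro h
      exact hvF.right (by exact_mod_cast Subtype.ext h)
    have hzv : ⁅z, ((v : Wsp) : V)⁆ = c • ((v : Wsp) : V) := by
      have := hvF.apply_eq_smul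
      have h2 := congrArg Subtype.val this
      exact h2
    refine ⟨fun a => χ₁ ⟨a - (φ a / φ z) • z, ?_⟩ + (φ a / φ z) * c, (v : Wsp), hveq, ?_⟩
    · show φ (a - (φ a / φ z) • z) = 0
      rw [map_sub, map_smul, smul_eq_mul, div_mul_cancel₀ _ hφz, sub_self]
    · intro a
      have hdecomp : a = (a - (φ a / φ z) • z) + (φ a / φ z) • z := by abel
      set t := φ a / φ z
      set h₁ : L := a - t • z with hh₁
      have hmem : h₁ ∈ H := by
        show φ h₁ = 0
        rw [hh₁, map_sub, map_smul, smul_eq_mul, div_mul_cancel₀ _ hφz, sub_self]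
      calc ⁅a, ((v : Wsp) : V)⁆ = ⁅h₁ + t • z, ((v : Wsp) : V)⁆ := by rw [← hdecomp]
        _ = ⁅h₁, ((v : Wsp) : V)⁆ + t • ⁅z, ((v : Wsp) : V)⁆ := by
            rw [add_lie, smul_lie]
        _ = χ₁ ⟨h₁, hmem⟩ • ((v : Wsp) : V) + t • (c • ((v : Wsp) : V)) := by
            rw [v.2 ⟨h₁, hmem⟩, hzv]
        _ = (χ₁ ⟨h₁, hmem⟩ + t * c) • ((v : Wsp) : V) := by
            rw [add_smul, smul_smul]
  termination_by finrank K L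
  decreasing_by exact hrank

end LieTheorem2
section MainProof

variable {K : Type} [Field K] {n : ℕ}

lemma deriv_lie_smul (E F : Wn K n) (f : MvPolynomial (Fin n) K) :
    ⁅E, f • F⁆ = f • ⁅E, F⁆ + (E f) • F := by
  apply Derivation.ext
  intro a
  show E ((f • F) a) - (f • F) (E a) = (f • ⁅E, F⁆ + (E f) • F) a
  have h1 : (f • F) a = f * F a := rfl
  have h2 : (f • F) (E a) = f * F (E a) := rfl
  have h3 : (f • ⁅E, F⁆ + (E f) • F) a = f * (E (F a) - F (E a)) + (E f) * F a := rfl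
  rw [h1, h2, h3, Derivation.leibniz, smul_eq_mul, smul_eq_mul]
  ring

lemma deriv_ksmul (c : K) (D : Wn K n) : c • D = (C c : MvPolynomial (Fin n) K) • D := by
  have h : (c • (1 : MvPolynomial (Fin n) K)) = (C c : MvPolynomial (Fin n) K) := by
    rw [smul_eq_C_mul, mul_one]
  conv_lhs => rw [← one_smul (MvPolynomial (Fin n) K) D, ← smul_assoc, h]

lemma wadd_lie (x y D : Wn K n) : ⁅x + y, D⁆ = ⁅x, D⁆ + ⁅y, D⁆ := add_lie x y D
lemma wzero_lie (D : Wn K n) : ⁅(0 : Wn K n), D⁆ = 0 := zero_lie D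
lemma wsmul_lie (c : K) (x D : Wn K n) : ⁅c • x, D⁆ = c • ⁅x, D⁆ := smul_lie c x D
lemma wlie_lie (x y D : Wn K n) : ⁅⁅x, y⁆, D⁆ = ⁅x, ⁅y, D⁆⁆ - ⁅y, ⁅x, D⁆⁆ := lie_lie x y D
lemma wlie_skew (x D : Wn K n) : ⁅x, D⁆ = -⁅D, x⁆ := (lie_skew x D) ▸ rfl
lemma wlie_self (D : Wn K n) : ⁅D, D⁆ = 0 := lie_self D

set_option maxHeartbeats 2000000 in
/-- Let `n ≥ 2`. A finite-dimensional maximal Lie subalgebra of `Wn` is not solvable. -/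
theorem finiteDimensional_maximal_subalgebra_not_solvable'
    [IsAlgClosed K] [CharZero K] (hn : 2 ≤ n)
    (M : LieSubalgebra K (Wn K n)) (hMtop : M ≠ ⊤)
    (hmax : ∀ L : LieSubalgebra K (Wn K n), M < L → L = ⊤)
    (hfd : FiniteDimensional K M) :
    ¬ LieAlgebra.IsSolvable M := by
  intro hsolv
  set i0 : Fin n := ⟨0, by omega⟩ with hi0
  set i1 : Fin n := ⟨1, by omega⟩ with hi1
  have hi01 : i0 ≠ i1 := by
    intro h
    have := congrArg Fin.val h
    simp [hi0, hi1] at this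
  -- Step A : M ≠ ⊥
  have hMbot : M ≠ ⊥ := by
    intro hbot
    set E1 : Wn K n := MvPolynomial.mkDerivation K (Pi.single i0 1) with hE1def
    have hE1 : E1 ≠ 0 := by
      intro h
      have h1 : E1 (X i0) = 0 := by rw [h]; rfl
      rw [hE1def, mkDerivation_X, Pi.single_eq_same] at h1
      exact one_ne_zero h1
    set L1 : LieSubalgebra K (Wn K n) :=
      { toSubmodule := Submodule.span K {E1}
        lie_mem' := by
          intro x y hx hy
          obtain ⟨c, rfl⟩ := Submodule.mem_span_singleton.mp hx
          obtain ⟨e, rfl⟩ := Submodule.mem_span_singleton.mp hy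
          show _ ∈ Submodule.span K {E1}
          rw [Submodule.mem_span_singleton]
          refine ⟨0, ?_⟩
          rw [lie_smul, smul_lie, lie_self]
          simp } with hL1
    have hE1L1 : E1 ∈ L1 := Submodule.mem_span_singleton_self E1
    have hlt : M < L1 := by
      rw [hbot]
      refine bot_lt_iff_ne_bot.mpr (fun h => hE1 ?_)
      rw [h] at hE1L1
      simpa using hE1L1
    have htop := hmax L1 hlt
    set E2 : Wn K n := MvPolynomial.mkDerivation K (Pi.single i1 1) with hE2def
    have hE2L1 : E2 ∈ L1 := by rw [htop]; trivial
    have hE2span : E2 ∈ Submodule.span K {E1} := hE2L1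
    rw [Submodule.mem_span_singleton] at hE2span
    obtain ⟨c, hc⟩ := hE2span
    have h1 : E2 (X i1) = 1 := by rw [hE2def, mkDerivation_X, Pi.single_eq_same]
    have h2 : E1 (X i1) = 0 := by
      rw [hE1def, mkDerivation_X]
      exact Pi.single_eq_of_ne (Ne.symm hi01) 1
    have h3 : (c • E1) (X i1) = c • (E1 (X i1)) := rfl
    rw [hc, h1, h2, smul_zero] at h3
    exact one_ne_zero h3
  haveI : Nontrivial M := by
    rcases subsingleton_or_nontrivial M with hs | hnt
    · exfalso
      apply hMbot
      ext x
      simp only [LieSubalgebra.mem_bot]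
      constructor
      · intro hx
        have : (⟨x, hx⟩ : M) = ⟨0, M.zero_mem'⟩ := Subsingleton.elim _ _
        exact congrArg Subtype.val this
      · intro hx; rw [hx]; exact M.zero_mem'
    · exact hnt
  -- Lie's theorem: one-dimensional `M`-stable line
  obtain ⟨χ, v, hv0, hvx⟩ :
      ∃ (χ : M → K) (v : M), v ≠ 0 ∧ ∀ x : M, ⁅x, v⁆ = χ x • v :=
    solvable_exists_common_eigenvector M
  set D : Wn K n := (v : Wn K n) with hD
  have hD0 : D ≠ 0 := fun h => hv0 (Subtype.ext h)
  have hMD : ∀ m : M, ⁅(m : Wn K n), D⁆ = (C (χ m) : MvPolynomial (Fin n) K) • D := by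
    intro m
    have h1 := congrArg (Subtype.val) (hvx m)
    rw [LieSubalgebra.coe_bracket] at h1
    have h2 : ((χ m • v : M) : Wn K n) = χ m • D := rfl
    rw [h2] at h1
    rw [h1, deriv_ksmul]
  -- The subalgebra P
  set P : LieSubalgebra K (Wn K n) :=
    { carrier := {E | ∃ f : MvPolynomial (Fin n) K, ⁅E, D⁆ = f • D}
      add_mem' := by
        rintro x y ⟨f, hf⟩ ⟨g, hg⟩
        refine ⟨f + g, ?_⟩
        show ⁅x + y, D⁆ = (f + g) • D
        rw [wadd_lie, hf, hg, add_smul]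
      zero_mem' := ⟨0, by show ⁅(0 : Wn K n), D⁆ = (0 : MvPolynomial (Fin n) K) • D; rw [wzero_lie, zero_smul]⟩
      smul_mem' := by
        rintro c x ⟨f, hf⟩
        refine ⟨c • f, ?_⟩
        show ⁅c • x, D⁆ = (c • f) • D
        rw [wsmul_lie, hf, smul_assoc]
      lie_mem' := by
        rintro x y ⟨f, hf⟩ ⟨g, hg⟩
        refine ⟨x g - y f, ?_⟩
        show ⁅⁅x, y⁆, D⁆ = (x g - y f) • D
        calc ⁅⁅x, y⁆, D⁆ = ⁅x, ⁅y, D⁆⁆ - ⁅y, ⁅x, D⁆⁆ := wlie_lie x y D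
          _ = ⁅x, g • D⁆ - ⁅y, f • D⁆ := by rw [hf, hg]
          _ = (g • ⁅x, D⁆ + (x g) • D) - (f • ⁅y, D⁆ + (y f) • D) := by
              rw [deriv_lie_smul, deriv_lie_smul]
          _ = (g • (f • D) + (x g) • D) - (f • (g • D) + (y f) • D) := by rw [hf, hg]
          _ = (x g - y f) • D := by
              apply Derivation.ext
              intro a
              show (g * (f * D a) + x g * D a) - (f * (g * D a) + y f * D a)
                  = (x g - y f) * D a
              ring } with hP
  have hMP : M ≤ P := by
    intro m hm
    exact ⟨C (χ ⟨m, hm⟩), hMD ⟨m, hm⟩⟩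
  have hfDP : ∀ f : MvPolynomial (Fin n) K, f • D ∈ P := by
    intro f
    refine ⟨-(D f), ?_⟩
    show ⁅f • D, D⁆ = (-(D f)) • D
    apply Derivation.ext
    intro a
    show (f * D (D a)) - D (f * D a) = (-(D f)) * D a
    rw [Derivation.leibniz, smul_eq_mul, smul_eq_mul]
    ring
  have hnotall : ¬ ∀ f : MvPolynomial (Fin n) K, f • D ∈ M := by
    intro hall
    set lmap : MvPolynomial (Fin n) K →ₗ[K] M :=
      { toFun := fun f => ⟨f • D, hall f⟩
        map_add' := fun f g => Subtype.ext (add_smul f g D)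
        map_smul' := fun c f => Subtype.ext (smul_assoc c f D) } with hlmap
    have hinj : Function.Injective lmap := by
      intro f g h
      have h2 : f • D = g • D := congrArg Subtype.val h
      obtain ⟨a, ha⟩ : ∃ a, D a ≠ 0 := by
        by_contra hno
        push_neg at hno
        exact hD0 (Derivation.ext fun a => hno a)
      have h3 : f * D a = g * D a := congrArg (fun T => T a) h2
      have h4 : (f - g) * D a = 0 := by rw [sub_mul, h3, sub_self]
      rcases mul_eq_zero.mp h4 with h5 | h5
      · exact sub_eq_zero.mp h5
      · exact absurd h5 ha
    haveI : FiniteDimensional K (MvPolynomial (Fin n) K) :=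
      FiniteDimensional.of_injective lmap hinj
    have hfin : Finite ((Fin n) →₀ ℕ) :=
      Module.Finite.finite_basis (MvPolynomial.basisMonomials (Fin n) K)
    have hinf : Infinite ((Fin n) →₀ ℕ) :=
      Infinite.of_injective (fun k : ℕ => Finsupp.single i0 k) (Finsupp.single_injective i0)
    exact hfin.not_infinite hinf
  obtain ⟨f₀, hf₀⟩ := not_forall.mp hnotall
  have hMltP : M < P := by
    refine lt_of_le_of_ne hMP (fun h => hf₀ ?_)
    have := hfDP f₀
    rw [← h] at this
    exact this
  have hPtop := hmax P hMltP
  have key : ∀ E : Wn K n, ∃ f : MvPolynomial (Fin n) K, ⁅E, D⁆ = f • D := by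
    intro E
    have : E ∈ P := by rw [hPtop]; trivial
    exact this
  -- Final computation
  obtain ⟨i₂, hdi2⟩ : ∃ i, D (X i) ≠ 0 := by
    by_contra hno
    push_neg at hno
    exact hD0 (MvPolynomial.derivation_ext fun i => hno i)
  obtain ⟨j, hj⟩ : ∃ j : Fin n, j ≠ i₂ :=
    Fintype.exists_ne_of_one_lt_card (by simp; omega) i₂
  set E' : Wn K n := MvPolynomial.mkDerivation K (Pi.single j 1) with hE'def
  have hE'i2 : E' (X i₂) = 0 := by
    rw [hE'def, mkDerivation_X]
    exact Pi.single_eq_of_ne (Ne.symm hj) 1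
  have hE'j : E' (X j) = 1 := by rw [hE'def, mkDerivation_X, Pi.single_eq_same]
  obtain ⟨f, hfkey⟩ := key E'
  obtain ⟨g, hgkey⟩ := key ((X i₂ : MvPolynomial (Fin n) K) • E')
  have eqA : E' (D (X i₂)) - D (E' (X i₂)) = f * D (X i₂) :=
    congrArg (fun T => T (X i₂)) hfkey
  rw [hE'i2, map_zero, sub_zero] at eqA
  have eqB : E' (D (X j)) - D (E' (X j)) = f * D (X j) :=
    congrArg (fun T => T (X j)) hfkey
  rw [hE'j, Derivation.map_one_eq_zero, sub_zero] at eqB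
  have eqC : X i₂ * E' (D (X i₂)) - D (X i₂ * E' (X i₂)) = g * D (X i₂) :=
    congrArg (fun T => T (X i₂)) hgkey
  rw [hE'i2, mul_zero, map_zero, sub_zero] at eqC
  have eqD : X i₂ * E' (D (X j)) - D (X i₂ * E' (X j)) = g * D (X j) :=
    congrArg (fun T => T (X j)) hgkey
  rw [hE'j, mul_one] at eqD
  -- deduce g = X i₂ * f
  have h5 : (X i₂ * f - g) * D (X i₂) = 0 := by
    rw [sub_mul, mul_assoc, ← eqA, eqC, sub_self]
  have hg : g = X i₂ * f := by
    rcases mul_eq_zero.mp h5 with h6 | h6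
    · exact (sub_eq_zero.mp h6).symm
    · exact absurd h6 hdi2
  -- conclude D (X i₂) = 0, contradiction
  have h7 : D (X i₂) = 0 := by
    rw [hg, eqB] at eqD
    linear_combination -eqD
  exact hdi2 h7

end MainProof

/-- Let `n ≥ 2`. A finite-dimensional maximal Lie subalgebra of `Wn` is not solvable. -/
theorem finiteDimensional_maximal_subalgebra_not_solvable
    {K : Type} [Field K] [IsAlgClosed K] [CharZero K] {n : ℕ} (hn : 2 ≤ n)
    (M : LieSubalgebra K (Wn K n)) (hMtop : M ≠ ⊤)
    (hmax : ∀ L : LieSubalgebra K (Wn K n), M < L → L = ⊤)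
    (hfd : FiniteDimensional K M) :
    ¬ LieAlgebra.IsSolvable M :=
  finiteDimensional_maximal_subalgebra_not_solvable' hn M hMtop hmax hfd
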